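/- Let L̂ ∈ ℝ^{(L−N)×(L−N)} be a matrix all of whose eigenvalues have positive real parts, let (A,B) be stabilizable with P ≻ 0 solving the Riccati equation PA + A^T P − PBB^T P = −Q for some Q ≻ 0, and set K = B^T P. If δ ≥ 1/(2·min_l Re λ_l(L̂)), then the Kronecker-structured matrix I_{L−N} ⊗ A − δ L̂ ⊗ BK is Hurwitz. -/

import Mathlib

open Matrix Kronecker

lemma re_quad {n : ℕ} (P : Matrix (Fin n) (Fin n) ℝ) (v : Fin n → ℂ) :
    (star v ⬝ᵥ ((P.map Complex.ofReal) *ᵥ v)).re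
      = ((fun i => (v i).re) ⬝ᵥ (P *ᵥ fun i => (v i).re))
      + ((fun i => (v i).im) ⬝ᵥ (P *ᵥ fun i => (v i).im)) := by
  simp only [dotProduct, mulVec, Pi.star_apply, Matrix.map_apply, Finset.mul_sum,
    ← Finset.sum_add_distrib]
  rw [Complex.re_sum]
  refine Finset.sum_congr rfl fun i _ => ?_
  rw [Complex.re_sum]
  refine Finset.sum_congr rfl fun j _ => ?_
  simp [Complex.mul_re]

lemma re_quad_pos {n : ℕ} {P : Matrix (Fin n) (Fin n) ℝ} (hP : P.PosDef) {v : Fin n → ℂ}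
    (hv : v ≠ 0) : 0 < (star v ⬝ᵥ ((P.map Complex.ofReal) *ᵥ v)).re := by
  rw [re_quad]
  set a : Fin n → ℝ := fun i => (v i).re with ha
  set b : Fin n → ℝ := fun i => (v i).im with hb
  have hab : a ≠ 0 ∨ b ≠ 0 := by
    by_contra h
    push_neg at h
    apply hv
    funext i
    have h1 := congrFun h.1 i
    have h2 := congrFun h.2 i
    simp [ha, hb] at h1 h2
    exact Complex.ext h1 h2
  rcases hab with h | h
  · have := hP.dotProduct_mulVec_pos h
    have h2 := hP.posSemidef.dotProduct_mulVec_nonneg b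
    simp only [star_trivial] at this h2
    linarith
  · have := hP.dotProduct_mulVec_pos h
    have h2 := hP.posSemidef.dotProduct_mulVec_nonneg a
    simp only [star_trivial] at this h2
    linarith

lemma re_quad_nonneg {n : ℕ} {P : Matrix (Fin n) (Fin n) ℝ} (hP : P.PosSemidef) (v : Fin n → ℂ) :
    0 ≤ (star v ⬝ᵥ ((P.map Complex.ofReal) *ᵥ v)).re := by
  rw [re_quad]
  have h1 := hP.dotProduct_mulVec_nonneg (fun i => (v i).re)
  have h2 := hP.dotProduct_mulVec_nonneg (fun i => (v i).im)
  simp only [star_trivial] at h1 h2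
  linarith

lemma conj_quad {n : ℕ} (X : Matrix (Fin n) (Fin n) ℝ) (v : Fin n → ℂ) :
    (starRingEnd ℂ) (star v ⬝ᵥ ((X.map Complex.ofReal) *ᵥ v))
      = star v ⬝ᵥ ((Xᵀ.map Complex.ofReal) *ᵥ v) := by
  have : (starRingEnd ℂ) (star v ⬝ᵥ ((X.map Complex.ofReal) *ᵥ v))
      = star (star v ⬝ᵥ ((X.map Complex.ofReal) *ᵥ v)) := rfl
  rw [this, star_dotProduct, star_star, star_mulVec, ← dotProduct_mulVec]
  have he : (X.map Complex.ofReal)ᴴ = Xᵀ.map Complex.ofReal := by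
    funext i j
    simp [conjTranspose_apply, Matrix.map_apply]
  rw [he]

lemma core {n nu : ℕ} (A P Q : Matrix (Fin n) (Fin n) ℝ) (B : Matrix (Fin n) (Fin nu) ℝ)
    (hP : P.PosDef) (hQ : Q.PosDef)
    (hRic : P * A + Aᵀ * P - P * B * Bᵀ * P = -Q)
    (c μ : ℂ) (hc : 1 ≤ 2 * c.re)
    (v : Fin n → ℂ) (hv : v ≠ 0)
    (heq : (A.map Complex.ofReal) *ᵥ v
      = c • (((B * (Bᵀ * P)).map Complex.ofReal) *ᵥ v) + μ • v) :
    μ.re < 0 := by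
  have hPt : Pᵀ = P := by
    have := hP.1
    rwa [IsHermitian, conjTranspose_eq_transpose_of_trivial] at this
  set F : Matrix (Fin n) (Fin n) ℝ → ℂ :=
    fun X => star v ⬝ᵥ ((X.map Complex.ofReal) *ᵥ v) with hF
  have hmap : ∀ X Y : Matrix (Fin n) (Fin n) ℝ,
      ((X * Y).map Complex.ofReal) = X.map Complex.ofReal * Y.map Complex.ofReal := by
    intro X Y
    funext i j
    simp [Matrix.map_apply, Matrix.mul_apply]
  have hmulF : ∀ (X : Matrix (Fin n) (Fin n) ℝ) (u : Fin n → ℂ),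
      ((X).map Complex.ofReal) *ᵥ u = (X.map Complex.ofReal) *ᵥ u := fun _ _ => rfl
  -- E1
  have E1 : F (P * A) = c * F (P * B * Bᵀ * P) + μ * F P := by
    have h1 : (P * A).map Complex.ofReal *ᵥ v
        = P.map Complex.ofReal *ᵥ (A.map Complex.ofReal *ᵥ v) := by
      rw [hmap, ← mulVec_mulVec]
    have h2 : (P * (B * (Bᵀ * P))) = P * B * Bᵀ * P := by
      simp only [Matrix.mul_assoc]
    rw [hF]
    simp only [h1, heq, mulVec_add, mulVec_smul, dotProduct_add, dotProduct_smul, smul_eq_mul]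
    rw [mulVec_mulVec, ← hmap, h2]
  have Fconj : ∀ X : Matrix (Fin n) (Fin n) ℝ, (starRingEnd ℂ) (F X) = F Xᵀ :=
    fun X => conj_quad X v
  have hRt : (P * B * Bᵀ * P)ᵀ = P * B * Bᵀ * P := by
    simp [Matrix.transpose_mul, hPt, Matrix.mul_assoc]
  have E2 : F (Aᵀ * P) = (starRingEnd ℂ) c * F (P * B * Bᵀ * P) + (starRingEnd ℂ) μ * F P := by
    have := congrArg (starRingEnd ℂ) E1
    rw [map_add, _root_.map_mul, _root_.map_mul, Fconj, Fconj, Fconj] at this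
    rw [Matrix.transpose_mul, hPt, hRt] at this
    exact this
  -- additivity of F
  have Fsub : ∀ X Y : Matrix (Fin n) (Fin n) ℝ, F (X - Y) = F X - F Y := by
    intro X Y
    have : (X - Y).map Complex.ofReal = X.map Complex.ofReal - Y.map Complex.ofReal := by
      funext i j; simp [Matrix.map_apply]
    simp [hF, this, sub_mulVec, dotProduct_sub]
  have Fadd : ∀ X Y : Matrix (Fin n) (Fin n) ℝ, F (X + Y) = F X + F Y := by
    intro X Y
    have : (X + Y).map Complex.ofReal = X.map Complex.ofReal + Y.map Complex.ofReal := by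
      funext i j; simp [Matrix.map_apply]
    simp [hF, this, add_mulVec, dotProduct_add]
  have hric2 : P * A + Aᵀ * P = P * B * Bᵀ * P - Q := by
    rw [sub_eq_iff_eq_add] at hRic
    rw [hRic]; abel
  have main : F (P * B * Bᵀ * P) - F Q
      = (c + (starRingEnd ℂ) c) * F (P * B * Bᵀ * P) + (μ + (starRingEnd ℂ) μ) * F P := by
    have := congrArg₂ (· + ·) E1 E2
    simp only [← Fadd] at this
    rw [hric2, Fsub] at this
    rw [this]; ring
  have hRsd : (P * B * Bᵀ * P).PosSemidef := by
    have h := Matrix.posSemidef_conjTranspose_mul_self (Bᵀ * P)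
    rw [conjTranspose_eq_transpose_of_trivial, Matrix.transpose_mul, Matrix.transpose_transpose,
      hPt] at h
    simpa [Matrix.mul_assoc] using h
  have hPpos : 0 < (F P).re := re_quad_pos hP hv
  have hQpos : 0 < (F Q).re := re_quad_pos hQ hv
  have hRre : 0 ≤ (F (P * B * Bᵀ * P)).re := re_quad_nonneg hRsd v
  have hre := congrArg Complex.re main
  simp only [Complex.add_conj, Complex.sub_re, Complex.add_re, Complex.re_ofReal_mul] at hre
  have key : 2 * μ.re * (F P).re < 0 := by
    nlinarith [mul_nonneg (by linarith : (0:ℝ) ≤ 2 * c.re - 1) hRre]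
  by_contra hcon
  push_neg at hcon
  nlinarith [mul_nonneg hcon hPpos.le]

lemma root_mem_spectrum {d : ℕ} (T : Matrix (Fin d) (Fin d) ℂ) (ν : ℂ)
    (hroot : ν ∈ T.charpoly.roots) : ν ∈ spectrum ℂ T := by
  have hIs : T.charpoly.IsRoot ν := Polynomial.isRoot_of_mem_roots hroot
  have heval : Polynomial.eval ν T.charpoly = ((ν • 1 - T) : Matrix (Fin d) (Fin d) ℂ).det := by
    rw [Matrix.charpoly]
    rw [show Polynomial.eval ν (Matrix.charmatrix T).det
        = (Polynomial.evalRingHom ν) (Matrix.charmatrix T).det from rfl]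
    rw [RingHom.map_det]
    congr 1
    funext i j
    by_cases h : i = j
    · subst h
      simp [Matrix.charmatrix_apply_eq, Matrix.one_apply]
    · simp [Matrix.charmatrix_apply_ne _ _ _ h, Matrix.one_apply, h]
  rw [spectrum.mem_iff]
  intro hu
  rw [Matrix.isUnit_iff_isUnit_det] at hu
  rw [Algebra.algebraMap_eq_smul_one] at hu
  rw [Polynomial.IsRoot, heval] at hIs
  rw [hIs] at hu
  exact (not_isUnit_zero : ¬ IsUnit (0:ℂ)) hu

lemma colext {d n : ℕ} (T : Matrix (Fin d) (Fin d) ℂ) (Am M : Matrix (Fin n) (Fin n) ℂ) (μ : ℂ)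
    (V : Matrix (Fin n) (Fin d) ℂ) (hV : V ≠ 0)
    (heq : Am * V = M * V * T + μ • V) :
    ∃ ν ∈ spectrum ℂ T, ∃ v : Fin n → ℂ, v ≠ 0 ∧ Am *ᵥ v = ν • (M *ᵥ v) + μ • v := by
  -- find w₀ with V *ᵥ w₀ ≠ 0
  obtain ⟨w₀, hw₀⟩ : ∃ w₀ : Fin d → ℂ, V *ᵥ w₀ ≠ 0 := by
    by_contra h
    push_neg at h
    apply hV
    funext i j
    have := congrFun (h (Pi.single j 1)) i
    rw [mulVec_single] at this
    simpa using this
  set g : ℂ → Matrix (Fin d) (Fin d) ℂ := fun a => T - a • 1 with hg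
  set l : List ℂ := T.charpoly.roots.toList with hl
  have hzero : (l.map g).prod = 0 := by
    have h1 : T.charpoly = (l.map fun a => Polynomial.X - Polynomial.C a).prod := by
      have := (IsAlgClosed.splits T.charpoly).eq_prod_roots_of_monic T.charpoly_monic
      rw [this]
      rw [← Multiset.coe_toList T.charpoly.roots, Multiset.map_coe, Multiset.prod_coe]
    have h2 := Matrix.aeval_self_charpoly T
    rw [h1] at h2
    rw [map_list_prod (Polynomial.aeval T)] at h2
    rw [List.map_map] at h2
    rw [← h2]
    congr 1
    apply List.map_congr_left
    intro a _
    simp [hg, Function.comp, Algebra.algebraMap_eq_smul_one]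
  set f : ℕ → (Fin d → ℂ) := fun k => ((l.drop k).map g).prod *ᵥ w₀ with hf
  have hex : ∃ k, V *ᵥ f k ≠ 0 := by
    refine ⟨l.length, ?_⟩
    simp only [hf, List.drop_length, List.map_nil, List.prod_nil, one_mulVec]
    exact hw₀
  set k₀ := Nat.find hex with hk₀def
  have hk₀ : V *ᵥ f k₀ ≠ 0 := Nat.find_spec hex
  have hf0 : V *ᵥ f 0 = 0 := by
    simp only [hf, List.drop_zero, hzero, zero_mulVec, mulVec_zero]
  have hk₀pos : 0 < k₀ := by
    rcases Nat.eq_zero_or_pos k₀ with h | h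
    · exact absurd (h ▸ hk₀) (by simp [hf0])
    · exact h
  set j := k₀ - 1 with hj
  have hjk : j + 1 = k₀ := Nat.succ_pred_eq_of_pos hk₀pos
  have hjlt : j < k₀ := Nat.sub_lt hk₀pos one_pos
  have hVfj : V *ᵥ f j = 0 := by
    have := Nat.find_min hex hjlt
    simpa using this
  have hk₀le : k₀ ≤ l.length := Nat.find_le (by
    simp only [hf, List.drop_length, List.map_nil, List.prod_nil, one_mulVec]
    exact hw₀)
  have hjlen : j < l.length := lt_of_lt_of_le hjlt hk₀le
  set ν := l.get ⟨j, hjlen⟩ with hν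
  have hstep : f j = (T - ν • 1) *ᵥ f (j + 1) := by
    rw [hf]
    simp only
    rw [List.drop_eq_getElem_cons hjlen, List.map_cons, List.prod_cons, ← mulVec_mulVec]
    rfl
  set w := f (j + 1) with hw
  have hwne : V *ᵥ w ≠ 0 := by rw [hw, hjk]; exact hk₀
  have hTw : V *ᵥ (T *ᵥ w) = ν • (V *ᵥ w) := by
    have h0 : V *ᵥ f j = 0 := hVfj
    rw [hstep] at h0
    rw [sub_mulVec, smul_mulVec, one_mulVec, mulVec_sub, mulVec_smul, sub_eq_zero] at h0
    exact h0
  refine ⟨ν, ?_, V *ᵥ w, hwne, ?_⟩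
  · apply root_mem_spectrum
    rw [← Multiset.mem_toList]
    exact List.get_mem l ⟨j, hjlen⟩
  · have h := congrArg (fun X => X *ᵥ w) heq
    rw [add_mulVec, smul_mulVec, ← mulVec_mulVec, ← mulVec_mulVec, ← mulVec_mulVec] at h
    rw [hTw, mulVec_smul] at h
    exact h

lemma mem_spectrum_of_transpose {d : ℕ} {M : Matrix (Fin d) (Fin d) ℂ} {ν : ℂ}
    (h : ν ∈ spectrum ℂ Mᵀ) : ν ∈ spectrum ℂ M := by
  rw [spectrum.mem_iff] at h ⊢
  intro hu
  apply h
  rw [Matrix.isUnit_iff_isUnit_det] at hu ⊢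
  rw [show algebraMap ℂ (Matrix (Fin d) (Fin d) ℂ) ν - Mᵀ = (algebraMap ℂ _ ν - M)ᵀ by
    rw [Matrix.transpose_sub]
    congr 1
    simp [Algebra.algebraMap_eq_smul_one]]
  rwa [Matrix.det_transpose]

/-- If all eigenvalues of `Lhat` have positive real parts, `P ≻ 0` solves
the Riccati equation, `K = BᵀP`, and `δ ≥ 1/(2·min Re λ(Lhat))`, then
`I ⊗ A − δ (Lhat ⊗ BK)` is Hurwitz. -/
theorem stmt4 (d n nu : ℕ)
    (Lhat : Matrix (Fin d) (Fin d) ℝ)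
    (hpos : ∀ μ ∈ spectrum ℂ (Lhat.map Complex.ofReal), 0 < μ.re)
    (A : Matrix (Fin n) (Fin n) ℝ) (B : Matrix (Fin n) (Fin nu) ℝ)
    (P Q : Matrix (Fin n) (Fin n) ℝ) (hP : P.PosDef) (hQ : Q.PosDef)
    (hRic : P * A + Aᵀ * P - P * B * Bᵀ * P = -Q)
    (K : Matrix (Fin nu) (Fin n) ℝ) (hK : K = Bᵀ * P)
    (δ : ℝ)
    (hδ : 1 / (2 * sInf (Complex.re '' spectrum ℂ (Lhat.map Complex.ofReal))) ≤ δ) :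
    ∀ μ ∈ spectrum ℂ
      (((1 : Matrix (Fin d) (Fin d) ℝ) ⊗ₖ A - δ • (Lhat ⊗ₖ (B * K))).map Complex.ofReal),
      μ.re < 0 := by
  intro μ hμ
  set bigM : Matrix (Fin d × Fin n) (Fin d × Fin n) ℂ :=
    (((1 : Matrix (Fin d) (Fin d) ℝ) ⊗ₖ A - δ • (Lhat ⊗ₖ (B * K))).map Complex.ofReal) with hbigM
  -- extract eigenvector
  obtain ⟨x, hxne, hx⟩ : ∃ x : Fin d × Fin n → ℂ, x ≠ 0 ∧ bigM *ᵥ x = μ • x := by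
    rw [spectrum.mem_iff] at hμ
    have hdet : (algebraMap ℂ (Matrix (Fin d × Fin n) (Fin d × Fin n) ℂ) μ - bigM).det = 0 := by
      by_contra hd
      exact hμ (Matrix.isUnit_iff_isUnit_det _ |>.mpr (isUnit_iff_ne_zero.mpr hd))
    obtain ⟨x, hxne, hx0⟩ := (Matrix.exists_mulVec_eq_zero_iff).mpr hdet
    refine ⟨x, hxne, ?_⟩
    rw [sub_mulVec] at hx0
    rw [sub_eq_zero] at hx0
    rw [← hx0, Algebra.algebraMap_eq_smul_one, smul_mulVec, one_mulVec]
  -- reshape into matrix V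
  set V : Matrix (Fin n) (Fin d) ℂ := Matrix.of (fun jj ii => x (ii, jj)) with hV
  have hVne : V ≠ 0 := by
    intro h
    apply hxne
    funext p
    have := congrFun (congrFun h p.2) p.1
    simpa [hV] using this
  have heq : (A.map Complex.ofReal) * V
      = ((δ : ℂ) • ((B * K).map Complex.ofReal)) * V * ((Lhat.map Complex.ofReal)ᵀ) + μ • V := by
    funext jj ii
    have hxe := congrFun hx (ii, jj)
    simp only [hbigM, mulVec, dotProduct, Fintype.sum_prod_type, Matrix.map_apply,
      Matrix.sub_apply, Matrix.smul_apply, Matrix.kroneckerMap_apply, Matrix.one_apply,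
      Matrix.mul_apply, smul_eq_mul, Pi.smul_apply, Complex.ofReal_sub, Complex.ofReal_mul,
      apply_ite, Complex.ofReal_one, Complex.ofReal_zero, ite_mul, one_mul, zero_mul, mul_ite,
      mul_zero, sub_mul, Finset.sum_sub_distrib] at hxe
    have h1 : (∑ x_1 : Fin d, ∑ x_2 : Fin n,
        if ii = x_1 then (((A jj x_2 : ℝ) : ℂ) * x (x_1, x_2)) else 0)
        = ∑ x_2 : Fin n, ((A jj x_2 : ℝ) : ℂ) * x (ii, x_2) := by
      rw [Finset.sum_comm]
      simp
    rw [h1] at hxe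
    rw [sub_eq_iff_eq_add] at hxe
    simp only [Matrix.mul_apply, Matrix.add_apply, Pi.smul_apply, Matrix.smul_apply,
      Matrix.transpose_apply, Matrix.map_apply, Matrix.of_apply, smul_eq_mul, Finset.sum_mul,
      hV]
    rw [hxe, add_comm]
    congr 1
    refine Finset.sum_congr rfl fun i1 _ => Finset.sum_congr rfl fun i2 _ => by ring
  obtain ⟨ν, hνmem, v, hvne, hveq⟩ := colext _ _ _ μ V hVne heq
  have hνL : ν ∈ spectrum ℂ (Lhat.map Complex.ofReal) := mem_spectrum_of_transpose hνmem
  -- spectral bound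
  set S : Set ℝ := Complex.re '' spectrum ℂ (Lhat.map Complex.ofReal) with hS
  have hSfin : S.Finite := ((Lhat.map Complex.ofReal).finite_spectrum).image _
  have hSne : S.Nonempty := ⟨ν.re, ⟨ν, hνL, rfl⟩⟩
  have hm : sInf S ∈ S := hSne.csInf_mem hSfin
  obtain ⟨ν₀, hν₀, hν₀re⟩ := hm
  have hmpos : 0 < sInf S := by rw [← hν₀re]; exact hpos ν₀ hν₀
  have hνre : sInf S ≤ ν.re := csInf_le hSfin.bddBelow ⟨ν, hνL, rfl⟩
  have hδpos : 0 < δ := lt_of_lt_of_le (by positivity) hδ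
  have hc : 1 ≤ 2 * ((ν * (δ : ℂ)).re) := by
    have : (ν * (δ : ℂ)).re = ν.re * δ := by simp [Complex.mul_re]
    rw [this]
    rw [div_le_iff₀ (by positivity)] at hδ
    nlinarith [hpos ν hνL]
  refine core A P Q B hP hQ hRic (ν * (δ : ℂ)) μ hc v hvne ?_
  rw [← hK]
  rw [hveq, smul_mulVec, smul_smul]
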